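/- Let A, B, C be affinely independent points in ℝ², and let t, u be real numbers in [0,1] with t + u = 1. Set D = B + t•(C − B), F = B + u•(A − B), and E = D + (F − B) (so that BDEF is a parallelogram with D on segment BC, F on segment AB, and E on line CA). Then the area of the parallelogram BDEF satisfies |det(D − B, F − B)| ≤ (1/2) · |det(C − B, A − B)| / 2, i.e. the parallelogram's area is at most half the area of triangle ABC; moreover equality holds if and only if t = 1/2. -/

import Mathlib

def det2 (v w : ℝ × ℝ) : ℝ := v.1 * w.2 - v.2 * w.1

lemma det2_ne_of_affInd (A B C : ℝ × ℝ) (hABC : AffineIndependent ℝ ![A, B, C]) :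
    det2 (C - B) (A - B) ≠ 0 := by
  intro h0
  rw [affineIndependent_iff_not_collinear_set] at hABC
  apply hABC
  rw [collinear_iff_of_mem (show B ∈ ({A, B, C} : Set (ℝ × ℝ)) by simp)]
  have h0' : (C.1 - B.1) * (A.2 - B.2) - (C.2 - B.2) * (A.1 - B.1) = 0 := by
    simpa [det2] using h0
  by_cases hCB : C - B = 0
  · have hC : C = B := by rwa [sub_eq_zero] at hCB
    have hA : ∃ r : ℝ, A = r • (A - B) + B := ⟨1, by rw [one_smul, sub_add_cancel]⟩
    have hB : ∃ r : ℝ, B = r • (A - B) + B := ⟨0, by simp⟩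
    have hC' : ∃ r : ℝ, C = r • (A - B) + B := ⟨0, by simp [hC]⟩
    exact ⟨A - B, by rintro p (rfl | rfl | rfl) <;> assumption⟩
  · have hA : ∃ r : ℝ, A = r • (C - B) + B := by
      by_cases h1 : C.1 - B.1 ≠ 0
      · refine ⟨(A.1 - B.1) / (C.1 - B.1), Prod.ext ?_ ?_⟩
        · simp; field_simp; ring
        · simp
          field_simp
          linear_combination h0'
      · push_neg at h1
        have h2 : C.2 - B.2 ≠ 0 := by
          intro h2
          exact hCB (Prod.ext (by simpa using h1) (by simpa using h2))
        refine ⟨(A.2 - B.2) / (C.2 - B.2), Prod.ext ?_ ?_⟩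
        · simp
          have hA1 : A.1 = B.1 := by
            have := h0'
            rw [h1] at this
            simp at this
            rcases this with h | h
            · exact absurd h h2
            · linarith
          rw [h1, hA1]; ring
        · simp; field_simp; ring
    exact ⟨C - B, by
      have hB : ∃ r : ℝ, B = r • (C - B) + B := ⟨0, by simp⟩
      have hC' : ∃ r : ℝ, C = r • (C - B) + B := ⟨1, by rw [one_smul, sub_add_cancel]⟩
      rintro p (rfl | rfl | rfl) <;> assumption⟩

theorem stmt0 (A B C : ℝ × ℝ) (hABC : AffineIndependent ℝ ![A, B, C])
    (t u : ℝ) (ht : t ∈ Set.Icc (0:ℝ) 1) (hu : u ∈ Set.Icc (0:ℝ) 1)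
    (htu : t + u = 1)
    (D F E : ℝ × ℝ)
    (hD : D = B + t • (C - B))
    (hF : F = B + u • (A - B))
    (hE : E = D + (F - B)) :
    |det2 (D - B) (F - B)| ≤ |det2 (C - B) (A - B)| / 2 / 2 ∧
      (|det2 (D - B) (F - B)| = |det2 (C - B) (A - B)| / 2 / 2 ↔ t = 1/2) := by
  obtain ⟨ht0, ht1⟩ := ht
  obtain ⟨hu0, hu1⟩ := hu
  have hK := det2_ne_of_affInd A B C hABC
  set K := det2 (C - B) (A - B) with hKdef
  have hKpos : 0 < |K| := abs_pos.mpr hK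
  have hDB : D - B = t • (C - B) := by rw [hD]; abel
  have hFB : F - B = u • (A - B) := by rw [hF]; abel
  have key : det2 (D - B) (F - B) = t * u * K := by
    rw [hDB, hFB]
    simp only [det2, Prod.smul_fst, Prod.smul_snd, smul_eq_mul, hKdef]
    ring
  have habs : |det2 (D - B) (F - B)| = t * u * |K| := by
    rw [key, abs_mul, abs_of_nonneg (mul_nonneg ht0 hu0)]
  rw [habs]
  have h14 : t * u ≤ 1 / 4 := by nlinarith [sq_nonneg (t - u)]
  constructor
  · have := mul_le_mul_of_nonneg_right h14 (abs_nonneg K)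
    linarith
  · constructor
    · intro heq
      have htu4 : t * u = 1 / 4 := by
        have h' : t * u * |K| = 1 / 4 * |K| := by linarith
        exact mul_right_cancel₀ (ne_of_gt hKpos) h'
      have hsq : (t - u) ^ 2 = 0 := by nlinarith
      have := pow_eq_zero_iff (n := 2) (by norm_num) |>.mp hsq
      linarith
    · intro htt
      have hut : u = 1/2 := by linarith
      rw [htt, hut]; ring
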